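/- Let F be a totally real number field and (w_τ)_{τ∈Σ_∞} ∈ ℤ^{Σ_∞} a tuple of integers indexed by the archimedean places of F. If the group homomorphism O_F^× → ℂ^×, a ↦ ∏_{τ∈Σ_∞} τ(a)^{w_τ}, has finite order (equivalently, finite image), then w_τ is independent of τ, i.e. there is w ∈ ℤ with w_τ = w for all τ ∈ Σ_∞. -/

import Mathlib

open scoped BigOperators

open NumberField NumberField.InfinitePlace NumberField.Units
  NumberField.Units.dirichletUnitTheorem Finset

/-- Let `F` be a totally real number field (every complex embedding of `F` is real)
and `(w_τ)_{τ ∈ Σ_∞} ∈ ℤ^{Σ_∞}` a tuple of integers indexed by the archimedean places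
of `F`, regarded as the embeddings `τ : F →+* ℂ` (all of which are real).
If the group homomorphism `𝒪_F^× → ℂ^×`, `a ↦ ∏_{τ ∈ Σ_∞} τ(a)^{w_τ}`, has finite
order — equivalently, finite image — then `w_τ` is independent of `τ`: there is
`w ∈ ℤ` with `w_τ = w` for all `τ ∈ Σ_∞`. -/
theorem constant_exponents_of_finite_image
    (F : Type*) [Field F] [NumberField F]
    (htotallyReal : ∀ φ : F →+* ℂ, NumberField.ComplexEmbedding.IsReal φ)
    (w : (F →+* ℂ) → ℤ)
    (hfin : (Set.range fun a : (NumberField.RingOfIntegers F)ˣ =>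
        ∏ τ : F →+* ℂ,
          (τ (algebraMap (NumberField.RingOfIntegers F) F
            ((a : (NumberField.RingOfIntegers F)ˣ) : NumberField.RingOfIntegers F))) ^ (w τ)).Finite) :
    ∃ w0 : ℤ, ∀ τ : F →+* ℂ, w τ = w0 := by
  classical
  set f : (𝓞 F)ˣ → ℂ := fun a =>
    ∏ τ : F →+* ℂ, (τ (algebraMap (𝓞 F) F (a : 𝓞 F))) ^ (w τ) with hfdef
  -- basic nonvanishing
  have hne : ∀ (a : (𝓞 F)ˣ) (τ : F →+* ℂ), τ (algebraMap (𝓞 F) F (a : 𝓞 F)) ≠ 0 := by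
    intro a τ
    have h1 : ((a : 𝓞 F) : F) ≠ 0 := by
      simpa using (RingOfIntegers.coe_ne_zero_iff).mpr a.ne_zero
    rw [← RingOfIntegers.coe_eq_algebraMap]
    exact fun h => h1 (τ.injective (by simpa using h))
  have hfne : ∀ a : (𝓞 F)ˣ, f a ≠ 0 := by
    intro a
    exact Finset.prod_ne_zero_iff.mpr fun τ _ => zpow_ne_zero _ (hne a τ)
  -- f (a ^ n) = f a ^ n
  have hfpow : ∀ (a : (𝓞 F)ˣ) (n : ℕ), f (a ^ n) = (f a) ^ n := by
    intro a n
    rw [hfdef]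
    simp only
    rw [← Finset.prod_pow]
    refine Finset.prod_congr rfl fun τ _ => ?_
    rw [Units.val_pow_eq_pow_val, map_pow, map_pow, ← zpow_natCast, ← zpow_mul, mul_comm,
      zpow_mul, zpow_natCast]
  -- finite image implies |f a| = 1 (we only need log = 0)
  have hlog : ∀ a : (𝓞 F)ˣ, Real.log (‖f a‖) = 0 := by
    intro a
    obtain ⟨m, -, n, -, hmn, h⟩ := Set.Infinite.exists_ne_map_eq_of_mapsTo
      (Set.infinite_univ (α := ℕ)) (fun n _ => Set.mem_range_self (f := fun a : (𝓞 F)ˣ =>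
        ∏ τ : F →+* ℂ, (τ (algebraMap (𝓞 F) F (a : 𝓞 F))) ^ (w τ)) (a ^ n)) hfin
    have h' : (f a) ^ m = (f a) ^ n := by
      rw [← hfpow, ← hfpow]; exact h
    have h2 : (m : ℝ) * Real.log (‖f a‖) = n * Real.log (‖f a‖) := by
      rw [← Real.log_pow, ← Real.log_pow, ← norm_pow, ← norm_pow, h']
    have h3 : ((m : ℝ) - n) * Real.log (‖f a‖) = 0 := by ring_nf; linarith
    rcases mul_eq_zero.mp h3 with h4 | h4
    · exact absurd (by exact_mod_cast sub_eq_zero.mp h4) hmn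
    · exact h4
  -- log |f a| as a sum
  have hsum : ∀ a : (𝓞 F)ˣ,
      ∑ τ : F →+* ℂ, (w τ : ℝ) * Real.log (‖τ ((a : 𝓞 F) : F)‖) = 0 := by
    intro a
    have := hlog a
    rw [hfdef] at this
    simp only at this
    rw [norm_prod, Real.log_prod (fun τ _ =>
      norm_ne_zero_iff.mpr (zpow_ne_zero _ (hne a τ)))] at this
    convert this using 2 with τ
    rw [norm_zpow, Real.log_zpow, RingOfIntegers.coe_eq_algebraMap]
  -- all infinite places are real, and mk is a bijection
  have hreal : ∀ v : InfinitePlace F, IsReal v := fun v =>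
    isReal_iff.mpr (htotallyReal v.embedding)
  have hmk : Function.Bijective (InfinitePlace.mk : (F →+* ℂ) → InfinitePlace F) := by
    constructor
    · intro φ ψ h
      rcases mk_eq_iff.mp h with h | h
      · exact h
      · rw [← h]; exact (ComplexEmbedding.isReal_iff.mp (htotallyReal φ)).symm
    · exact fun v => ⟨v.embedding, mk_embedding v⟩
  set c : InfinitePlace F → ℤ := fun v => w v.embedding with hcdef
  have hc : ∀ τ : F →+* ℂ, c (InfinitePlace.mk τ) = w τ := by
    intro τ
    rw [hcdef]
    simp only
    rw [embedding_mk_eq_of_isReal (htotallyReal τ)]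
  -- reindex the sum over places
  have hsum' : ∀ a : (𝓞 F)ˣ,
      ∑ v : InfinitePlace F, (c v : ℝ) * Real.log (v ((a : 𝓞 F) : F)) = 0 := by
    intro a
    rw [← hsum a]
    refine (Fintype.sum_bijective _ hmk _ _ fun τ => ?_).symm
    rw [hc τ, InfinitePlace.apply]
  -- sums over the subtype {v // v ≠ w₀}
  have hsub : ∀ g : InfinitePlace F → ℝ,
      ∑ v : {v : InfinitePlace F // v ≠ w₀}, g v = ∑ v ∈ Finset.univ.erase w₀, g v := by
    intro g
    exact (Finset.sum_subtype _ (fun v => by simp [Finset.mem_erase]) g).symm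
  have hmult : ∀ v : InfinitePlace F, (mult v : ℝ) = 1 := by
    intro v
    rw [mult, if_pos (hreal v)]
    norm_num
  -- the linear functional
  set L : ({v : InfinitePlace F // v ≠ w₀} → ℝ) →ₗ[ℝ] ℝ :=
    ∑ v : {v : InfinitePlace F // v ≠ w₀}, ((c v : ℝ) - (c w₀ : ℝ)) • LinearMap.proj v
    with hLdef
  have hLapply : ∀ x, L x = ∑ v : {v : InfinitePlace F // v ≠ w₀},
      ((c v : ℝ) - (c w₀ : ℝ)) * x v := by
    intro x
    rw [hLdef]
    simp [LinearMap.sum_apply]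
  -- L vanishes on the unit lattice
  have hL0 : ∀ a : (𝓞 F)ˣ, L (logEmbedding F (Additive.ofMul a)) = 0 := by
    intro a
    rw [hLapply]
    have hcoord : ∀ v : {v : InfinitePlace F // v ≠ w₀},
        logEmbedding F (Additive.ofMul a) v = Real.log (v.val ((a : 𝓞 F) : F)) := by
      intro v
      rw [logEmbedding_component, hmult, one_mul]
    simp_rw [hcoord]
    -- product formula piece
    have hB : ∑ v : {v : InfinitePlace F // v ≠ w₀}, Real.log (v.val ((a : 𝓞 F) : F))
        = - Real.log (w₀ ((a : 𝓞 F) : F)) := by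
      have := sum_logEmbedding_component (K := F) a
      simp_rw [logEmbedding_component, hmult, one_mul, neg_mul, one_mul] at this
      exact this
    have hA : ∑ v : {v : InfinitePlace F // v ≠ w₀}, (c v : ℝ) * Real.log (v.val ((a : 𝓞 F) : F))
        = - ((c w₀ : ℝ) * Real.log (w₀ ((a : 𝓞 F) : F))) := by
      have h1 := hsum' a
      rw [← Finset.add_sum_erase _ _ (Finset.mem_univ w₀)] at h1
      rw [hsub fun v => (c v : ℝ) * Real.log (v ((a : 𝓞 F) : F))]
      linarith
    calc ∑ v : {v : InfinitePlace F // v ≠ w₀},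
          ((c v : ℝ) - (c w₀ : ℝ)) * Real.log (v.val ((a : 𝓞 F) : F))
        = (∑ v : {v : InfinitePlace F // v ≠ w₀}, (c v : ℝ) * Real.log (v.val ((a : 𝓞 F) : F)))
          - (c w₀ : ℝ) * ∑ v : {v : InfinitePlace F // v ≠ w₀},
            Real.log (v.val ((a : 𝓞 F) : F)) := by
          rw [Finset.mul_sum, ← Finset.sum_sub_distrib]
          exact Finset.sum_congr rfl fun v _ => by ring
      _ = 0 := by rw [hA, hB]; ring
  -- hence L vanishes identically
  have hLall : ∀ x, L x = 0 := by
    have hspan : Submodule.span ℝ (unitLattice F : Set _) ≤ LinearMap.ker L := by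
      rw [Submodule.span_le]
      rintro x ⟨a, -, rfl⟩
      exact LinearMap.mem_ker.mpr (hL0 a.toMul)
    rw [unitLattice_span_eq_top] at hspan
    intro x
    exact LinearMap.mem_ker.mp (hspan Submodule.mem_top)
  -- evaluate on standard basis vectors
  have hcw : ∀ v : InfinitePlace F, c v = c w₀ := by
    intro v
    by_cases hv : v = w₀
    · rw [hv]
    · have := hLall (Pi.single (⟨v, hv⟩ : {v : InfinitePlace F // v ≠ w₀}) 1)
      rw [hLapply] at this
      simp only [Pi.single_apply] at this
      rw [Finset.sum_eq_single (⟨v, hv⟩ : {v : InfinitePlace F // v ≠ w₀})] at this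
      · simp only [if_true, mul_one] at this
        exact_mod_cast sub_eq_zero.mp this
      · intro b _ hb
        rw [if_neg hb, mul_zero]
      · intro h
        exact absurd (Finset.mem_univ _) h
  refine ⟨c w₀, fun τ => ?_⟩
  rw [← hc τ, hcw (InfinitePlace.mk τ)]
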